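/- Let ℍⁿ be the n-fold product of the real quaternions, regarded as a right ℍ-module, with quaternionic Hermitian inner product and the associated real inner product given by its real part; for a purely imaginary unit quaternion q, right multiplication v ↦ v·q is an orthogonal real-linear map of ℍⁿ with square −id. Then for every 2-dimensional real linear subspace V ⊆ ℍⁿ with orthogonal projection P_V there exist pairwise orthogonal purely imaginary unit quaternions J₁, J₂, J₃ with J₁·J₂ = J₃ and an angle φ ∈ [0,π/2] such that for every unit vector v ∈ V: ‖P_V(v·J₁)‖ = cos(φ), P_V(v·J₂) = 0, and P_V(v·J₃) = 0. -/

import Mathlib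

open Quaternion
open scoped RealInnerProductSpace

/-- Right multiplication by a fixed quaternion on `ℍⁿ`, as a real-linear map. -/
noncomputable def rmulH (n : ℕ) (q : Quaternion ℝ) :
    (PiLp 2 fun _ : Fin n => Quaternion ℝ) →ₗ[ℝ] (PiLp 2 fun _ : Fin n => Quaternion ℝ) :=
  LinearMap.withLpMap 2 (LinearMap.pi fun i => (LinearMap.mulRight ℝ q).comp (LinearMap.proj i))

lemma rmulH_apply {n : ℕ} (q : Quaternion ℝ) (v : PiLp 2 fun _ : Fin n => Quaternion ℝ)
    (i : Fin n) : rmulH n q v i = v i * q := rfl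

lemma quat_inner_coords (p q : ℍ[ℝ]) :
    ⟪p, q⟫ = p.re * q.re + p.imI * q.imI + p.imJ * q.imJ + p.imK * q.imK := by
  simp [Quaternion.inner_def, Quaternion.re_mul]
  try ring

lemma quat_norm_one_iff (q : ℍ[ℝ]) :
    ‖q‖ = 1 ↔ q.re ^ 2 + q.imI ^ 2 + q.imJ ^ 2 + q.imK ^ 2 = 1 := by
  rw [norm_eq_sqrt_real_inner, Quaternion.inner_self, Quaternion.normSq_def']
  constructor
  · intro h
    have hnn : (0:ℝ) ≤ q.re ^ 2 + q.imI ^ 2 + q.imJ ^ 2 + q.imK ^ 2 := by positivity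
    nlinarith [Real.sq_sqrt hnn]
  · intro h; rw [h, Real.sqrt_one]

lemma quat_skew (q a b : ℍ[ℝ]) (hq : q.re = 0) :
    ⟪a * q, b⟫ = -⟪a, b * q⟫ := by
  simp [quat_inner_coords, Quaternion.re_mul, Quaternion.imI_mul, Quaternion.imJ_mul,
    Quaternion.imK_mul, hq]
  ring

lemma quat_cross (a b : ℍ[ℝ]) (ha : a.re = 0) (hb : b.re = 0) (na : ‖a‖ = 1) (nb : ‖b‖ = 1)
    (hab : ⟪a, b⟫ = 0) :
    (a * b).re = 0 ∧ ‖a * b‖ = 1 ∧ ⟪a, a * b⟫ = 0 ∧ ⟪b, a * b⟫ = 0 := by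
  rw [quat_inner_coords, ha, hb] at hab
  refine ⟨?_, ?_, ?_, ?_⟩
  · rw [Quaternion.re_mul, ha, hb]; linarith
  · rw [norm_mul, na, nb, one_mul]
  · rw [quat_inner_coords, ha, Quaternion.imI_mul, Quaternion.imJ_mul, Quaternion.imK_mul,
      ha, hb]
    ring
  · rw [quat_inner_coords, hb, Quaternion.imI_mul, Quaternion.imJ_mul, Quaternion.imK_mul,
      ha, hb]
    ring

section piLevel
variable {n : ℕ}
local notation "En" => PiLp 2 fun _ : Fin n => Quaternion ℝ

lemma inner_rmulH_skew (q : Quaternion ℝ) (hq : q.re = 0) (x y : En) :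
    ⟪rmulH n q x, y⟫ = -⟪x, rmulH n q y⟫ := by
  simp only [PiLp.inner_apply, rmulH_apply, RCLike.inner_apply]
  rw [← Finset.sum_neg_distrib]
  refine Finset.sum_congr rfl fun i _ => ?_
  simpa using quat_skew q (x i) (y i) hq

lemma inner_rmulH_self (q : Quaternion ℝ) (hq : q.re = 0) (x : En) :
    ⟪rmulH n q x, x⟫ = 0 := by
  have h := inner_rmulH_skew (n := n) q hq x x
  have h2 : ⟪x, rmulH n q x⟫ = ⟪rmulH n q x, x⟫ := real_inner_comm _ _
  rw [h2] at h; linarith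

lemma norm_rmulH (q : Quaternion ℝ) (x : En) : ‖rmulH n q x‖ = ‖x‖ * ‖q‖ := by
  rw [PiLp.norm_eq_of_L2, PiLp.norm_eq_of_L2]
  rw [← Real.sqrt_sq (norm_nonneg q), ← Real.sqrt_mul (by positivity)]
  congr 1
  rw [Finset.sum_mul]
  refine Finset.sum_congr rfl fun i _ => ?_
  rw [rmulH_apply, norm_mul]; ring

lemma norm_comb {F : Type*} [NormedAddCommGroup F] [InnerProductSpace ℝ F]
    (u w : F) (hu : ‖u‖ = 1) (hw : ‖w‖ = 1) (huw : ⟪u, w⟫ = 0) (x y : ℝ) :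
    ‖x • u + y • w‖ = Real.sqrt (x ^ 2 + y ^ 2) := by
  rw [norm_eq_sqrt_real_inner]
  congr 1
  have h1 : ⟪u, u⟫ = 1 := by rw [real_inner_self_eq_norm_mul_norm, hu]; ring
  have h2 : ⟪w, w⟫ = 1 := by rw [real_inner_self_eq_norm_mul_norm, hw]; ring
  have h3 : ⟪w, u⟫ = 0 := by rw [real_inner_comm]; exact huw
  simp only [inner_add_left, inner_add_right, real_inner_smul_left, real_inner_smul_right,
    h1, h2, h3, huw]
  ring

set_option maxHeartbeats 1000000 in
lemma key_proj_norm (V : Submodule ℝ (PiLp 2 fun _ : Fin n => Quaternion ℝ))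
    [FiniteDimensional ℝ V]
    (b : OrthonormalBasis (Fin 2) ℝ V)
    (q : Quaternion ℝ) (hq : q.re = 0) (v : En) (hv : v ∈ V) (hn : ‖v‖ = 1) :
    ‖(V.orthogonalProjectionOnto (rmulH n q v) : En)‖
      = |⟪rmulH n q (b 0 : En), (b 1 : En)⟫| := by
  set e₁ : En := (b 0 : En) with he₁
  set e₂ : En := (b 1 : En) with he₂
  set L : ℝ := ⟪rmulH n q e₁, e₂⟫ with hL
  set a : ℝ := b.repr ⟨v, hv⟩ 0 with ha
  set c : ℝ := b.repr ⟨v, hv⟩ 1 with hc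
  have hsum : a • b 0 + c • b 1 = ⟨v, hv⟩ := by
    have := b.sum_repr ⟨v, hv⟩
    rwa [Fin.sum_univ_two] at this
  have hvE : v = a • e₁ + c • e₂ := by
    have := congrArg (Subtype.val) hsum
    simpa using this.symm
  have hac : a ^ 2 + c ^ 2 = 1 := by
    have h1 : ‖b.repr ⟨v, hv⟩‖ = 1 := by
      rw [b.repr.norm_map]
      simpa using hn
    rw [EuclideanSpace.norm_eq] at h1
    have hnn : (0:ℝ) ≤ ∑ i : Fin 2, ‖b.repr ⟨v, hv⟩ i‖ ^ 2 := by positivity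
    have h2 : ∑ i : Fin 2, ‖b.repr ⟨v, hv⟩ i‖ ^ 2 = 1 := by
      nlinarith [Real.sq_sqrt hnn]
    simpa [Fin.sum_univ_two, ← ha, ← hc, sq_abs] using h2
  have hb := b.orthonormal
  have hu : ‖b 0‖ = 1 := hb.1 0
  have hw : ‖b 1‖ = 1 := hb.1 1
  have huw : ⟪b 0, b 1⟫ = 0 := hb.2 (by decide : (0 : Fin 2) ≠ 1)
  have hcom : ⟪e₂, rmulH n q e₁⟫ = L := by rw [hL]; exact real_inner_comm _ _
  have hcom2 : ⟪e₁, rmulH n q e₂⟫ = -L := by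
    rw [hL, inner_rmulH_skew q hq e₁ e₂]
    ring
  have hx1 : ⟪e₁, rmulH n q v⟫ = -c * L := by
    rw [hvE, map_add, map_smul, map_smul, real_inner_comm]
    rw [inner_add_left, real_inner_smul_left, real_inner_smul_left]
    rw [inner_rmulH_self q hq e₁]
    rw [inner_rmulH_skew q hq e₂ e₁]
    linear_combination (-c) * hcom
  have hx2 : ⟪e₂, rmulH n q v⟫ = a * L := by
    rw [hvE, map_add, map_smul, map_smul, real_inner_comm]
    rw [inner_add_left, real_inner_smul_left, real_inner_smul_left]
    rw [inner_rmulH_self q hq e₂]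
    rw [inner_rmulH_skew q hq e₁ e₂]
    linear_combination (-a) * hcom2
  have hproj : V.orthogonalProjectionOnto (rmulH n q v)
      = (-c * L) • b 0 + (a * L) • b 1 := by
    rw [b.orthogonalProjectionOnto_apply_eq_sum, Fin.sum_univ_two, ← he₁, ← he₂, hx1, hx2]
  have hfin : ‖V.orthogonalProjectionOnto (rmulH n q v)‖ = |L| := by
    rw [hproj, norm_comb (b 0) (b 1) hu hw huw]
    rw [show (-c * L) ^ 2 + (a * L) ^ 2 = L ^ 2 * (a ^ 2 + c ^ 2) by ring, hac, mul_one,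
      Real.sqrt_sq_eq_abs]
  rw [← hfin]
  rfl

end piLevel


def qIq : ℍ[ℝ] := ⟨0, 1, 0, 0⟩
def qJq : ℍ[ℝ] := ⟨0, 0, 1, 0⟩
def qKq : ℍ[ℝ] := ⟨0, 0, 0, 1⟩

lemma qIq_mul_qJq : qIq * qJq = qKq := by
  ext <;> simp [Quaternion.re_mul, Quaternion.imI_mul,
    Quaternion.imJ_mul, Quaternion.imK_mul] <;> simp [qIq, qJq, qKq]

lemma quat_decomp (q : ℍ[ℝ]) (hq : q.re = 0) :
    q = q.imI • qIq + q.imJ • qJq + q.imK • qKq := by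
  ext <;> simp [hq] <;> simp [qIq, qJq, qKq]

section Lfn
variable {n : ℕ}

/-- The linear functional `q ↦ ⟪e₁ q, e₂⟫`. -/
noncomputable def Lfn (n : ℕ) (e₁ e₂ : PiLp 2 fun _ : Fin n => Quaternion ℝ)
    (q : Quaternion ℝ) : ℝ := ⟪rmulH n q e₁, e₂⟫

lemma rmulH_addq (p q : ℍ[ℝ]) (v : PiLp 2 fun _ : Fin n => Quaternion ℝ) :
    rmulH n (p + q) v = rmulH n p v + rmulH n q v := by
  ext i : 1
  exact mul_add (v i) p q

lemma rmulH_smulq (x : ℝ) (q : ℍ[ℝ]) (v : PiLp 2 fun _ : Fin n => Quaternion ℝ) :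
    rmulH n (x • q) v = x • rmulH n q v := by
  ext i : 1
  exact mul_smul_comm x (v i) q

lemma Lfn_decomp (e₁ e₂ : PiLp 2 fun _ : Fin n => Quaternion ℝ) (q : ℍ[ℝ]) (hq : q.re = 0) :
    Lfn n e₁ e₂ q = q.imI * Lfn n e₁ e₂ qIq + q.imJ * Lfn n e₁ e₂ qJq
      + q.imK * Lfn n e₁ e₂ qKq := by
  conv_lhs => rw [Lfn, quat_decomp q hq]
  rw [rmulH_addq, rmulH_addq, rmulH_smulq, rmulH_smulq, rmulH_smulq,
    inner_add_left, inner_add_left, real_inner_smul_left, real_inner_smul_left,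
    real_inner_smul_left]
  rfl

lemma Lfn_bound (e₁ e₂ : PiLp 2 fun _ : Fin n => Quaternion ℝ) (hne₁ : ‖e₁‖ = 1)
    (hne₂ : ‖e₂‖ = 1) (q : ℍ[ℝ]) : |Lfn n e₁ e₂ q| ≤ ‖q‖ := by
  calc |Lfn n e₁ e₂ q| ≤ ‖rmulH n q e₁‖ * ‖e₂‖ := abs_real_inner_le_norm _ _
    _ = ‖q‖ := by rw [norm_rmulH, hne₁, hne₂]; ring

end Lfn

set_option maxHeartbeats 1000000 in
theorem two_dim_subspace_quaternionic_kahler_angle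
    (n : ℕ) (V : Submodule ℝ (PiLp 2 fun _ : Fin n => Quaternion ℝ))
    (hV : Module.finrank ℝ V = 2) :
    ∃ J₁ J₂ J₃ : Quaternion ℝ,
      J₁.re = 0 ∧ J₂.re = 0 ∧ J₃.re = 0 ∧
      ‖J₁‖ = 1 ∧ ‖J₂‖ = 1 ∧ ‖J₃‖ = 1 ∧
      ⟪J₁, J₂⟫ = 0 ∧ ⟪J₁, J₃⟫ = 0 ∧ ⟪J₂, J₃⟫ = 0 ∧
      J₁ * J₂ = J₃ ∧
      ∃ φ ∈ Set.Icc (0 : ℝ) (Real.pi / 2), ∀ v ∈ V, ‖v‖ = 1 →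
        ‖(V.orthogonalProjectionOnto (rmulH n J₁ v) : PiLp 2 fun _ : Fin n => Quaternion ℝ)‖
            = Real.cos φ ∧
        V.orthogonalProjectionOnto (rmulH n J₂ v) = 0 ∧
        V.orthogonalProjectionOnto (rmulH n J₃ v) = 0 := by
  classical
  haveI : FiniteDimensional ℝ V := inferInstance
  let b : OrthonormalBasis (Fin 2) ℝ V := (stdOrthonormalBasis ℝ V).reindex (finCongr hV)
  have hne₁ : ‖((b 0 : V) : PiLp 2 fun _ : Fin n => Quaternion ℝ)‖ = 1 := b.orthonormal.1 0
  have hne₂ : ‖((b 1 : V) : PiLp 2 fun _ : Fin n => Quaternion ℝ)‖ = 1 := b.orthonormal.1 1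
  set e₁ : PiLp 2 fun _ : Fin n => Quaternion ℝ := ((b 0 : V) : PiLp 2 fun _ : Fin n => Quaternion ℝ) with he₁
  set e₂ : PiLp 2 fun _ : Fin n => Quaternion ℝ := ((b 1 : V) : PiLp 2 fun _ : Fin n => Quaternion ℝ) with he₂
  have key : ∀ q : Quaternion ℝ, q.re = 0 → ∀ v ∈ V, ‖v‖ = 1 →
      ‖(V.orthogonalProjectionOnto (rmulH n q v) : PiLp 2 fun _ : Fin n => Quaternion ℝ)‖
        = |Lfn n e₁ e₂ q| :=
    fun q hq v hv hn => key_proj_norm V b q hq v hv hn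
  have hLbound : ∀ q : Quaternion ℝ, |Lfn n e₁ e₂ q| ≤ ‖q‖ := Lfn_bound e₁ e₂ hne₁ hne₂
  set a : ℝ := Lfn n e₁ e₂ qIq with haa
  set b2 : ℝ := Lfn n e₁ e₂ qJq with hbb
  set c : ℝ := Lfn n e₁ e₂ qKq with hcc
  have hLval : ∀ q : ℍ[ℝ], q.re = 0 →
      Lfn n e₁ e₂ q = q.imI * a + q.imJ * b2 + q.imK * c := fun q hq => Lfn_decomp e₁ e₂ q hq
  clear_value e₁ e₂
  clear he₁ he₂ b
  by_cases hS : a ^ 2 + b2 ^ 2 + c ^ 2 = 0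
  · -- degenerate case
    have ha0 : a = 0 := by nlinarith [sq_nonneg a, sq_nonneg b2, sq_nonneg c]
    have hb0 : b2 = 0 := by nlinarith [sq_nonneg a, sq_nonneg b2, sq_nonneg c]
    have hc0 : c = 0 := by nlinarith [sq_nonneg a, sq_nonneg b2, sq_nonneg c]
    refine ⟨qIq, qJq, qKq, rfl, rfl, rfl, ?_, ?_, ?_, ?_, ?_, ?_, qIq_mul_qJq, ?_⟩
    · rw [quat_norm_one_iff]; norm_num [qIq]
    · rw [quat_norm_one_iff]; norm_num [qJq]
    · rw [quat_norm_one_iff]; norm_num [qKq]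
    · rw [quat_inner_coords]; norm_num [qIq, qJq]
    · rw [quat_inner_coords]; norm_num [qIq, qKq]
    · rw [quat_inner_coords]; norm_num [qJq, qKq]
    refine ⟨Real.pi / 2, ⟨by positivity, le_refl _⟩, ?_⟩
    intro v hv hn
    have h1 := key qIq rfl v hv hn
    have h2 := key qJq rfl v hv hn
    have h3 := key qKq rfl v hv hn
    rw [← haa, ha0, abs_zero] at h1
    rw [← hbb, hb0, abs_zero] at h2
    rw [← hcc, hc0, abs_zero] at h3
    refine ⟨by rw [h1, Real.cos_pi_div_two], ?_, ?_⟩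
    · exact (Submodule.coe_eq_zero).mp (norm_eq_zero.mp h2)
    · exact (Submodule.coe_eq_zero).mp (norm_eq_zero.mp h3)
  · -- main case
    have hSpos : 0 < a ^ 2 + b2 ^ 2 + c ^ 2 := lt_of_le_of_ne (by positivity) (Ne.symm hS)
    set r : ℝ := Real.sqrt (a ^ 2 + b2 ^ 2 + c ^ 2) with hrr
    have hrpos : 0 < r := Real.sqrt_pos.mpr hSpos
    have hr2 : r ^ 2 = a ^ 2 + b2 ^ 2 + c ^ 2 := Real.sq_sqrt hSpos.le
    clear_value r
    set J₁ : ℍ[ℝ] := ⟨0, a / r, b2 / r, c / r⟩ with hJ₁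
    have hJ₁re : J₁.re = 0 := rfl
    have hJ₁n : ‖J₁‖ = 1 := by
      rw [quat_norm_one_iff]
      show (0:ℝ) ^ 2 + (a / r) ^ 2 + (b2 / r) ^ 2 + (c / r) ^ 2 = 1
      field_simp
      linarith [hr2]
    have hLJ₁ : Lfn n e₁ e₂ J₁ = r := by
      rw [hLval J₁ rfl]
      show a / r * a + b2 / r * b2 + c / r * c = r
      field_simp
      linarith [hr2]
    have hLinner : ∀ q : ℍ[ℝ], q.re = 0 → Lfn n e₁ e₂ q = r * ⟪q, J₁⟫ := by
      intro q hq
      rw [hLval q hq, quat_inner_coords, hq]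
      show q.imI * a + q.imJ * b2 + q.imK * c
        = r * (0 * 0 + q.imI * (a / r) + q.imJ * (b2 / r) + q.imK * (c / r))
      field_simp
      try ring
    have hr1 : r ≤ 1 := by
      have h := hLbound J₁
      rw [hLJ₁, hJ₁n, abs_of_pos hrpos] at h
      exact h
    obtain ⟨J₂, hJ₂re, hJ₂n, hJ₁J₂⟩ :
        ∃ J₂ : ℍ[ℝ], J₂.re = 0 ∧ ‖J₂‖ = 1 ∧ ⟪J₁, J₂⟫ = 0 := by
      by_cases hbc : b2 = 0 ∧ c = 0
      · refine ⟨qJq, rfl, ?_, ?_⟩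
        · rw [quat_norm_one_iff]; norm_num [qJq]
        · rw [quat_inner_coords]
          show (0:ℝ) * qJq.re + a / r * qJq.imI + b2 / r * qJq.imJ + c / r * qJq.imK = 0
          norm_num [qJq, hbc.1]
      · have hs : 0 < b2 ^ 2 + c ^ 2 := by
          rcases not_and_or.mp hbc with h | h
          · positivity
          · positivity
        have hspos : 0 < Real.sqrt (b2 ^ 2 + c ^ 2) := Real.sqrt_pos.mpr hs
        have hs2 : Real.sqrt (b2 ^ 2 + c ^ 2) ^ 2 = b2 ^ 2 + c ^ 2 := Real.sq_sqrt hs.le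
        set s : ℝ := Real.sqrt (b2 ^ 2 + c ^ 2) with hss
        clear_value s
        refine ⟨@id ℍ[ℝ] ⟨0, 0, -c / s, b2 / s⟩, rfl, ?_, ?_⟩
        · rw [quat_norm_one_iff]
          show (0:ℝ) ^ 2 + 0 ^ 2 + (-c / s) ^ 2 + (b2 / s) ^ 2 = 1
          field_simp
          linarith [hs2]
        · rw [quat_inner_coords]
          show (0:ℝ) * 0 + a / r * 0 + b2 / r * (-c / s) + c / r * (b2 / s) = 0
          field_simp
          ring
    obtain ⟨hJ₃re, hJ₃n, hJ₁J₃, hJ₂J₃⟩ :=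
      quat_cross J₁ J₂ hJ₁re hJ₂re hJ₁n hJ₂n hJ₁J₂
    have hLJ₂ : Lfn n e₁ e₂ J₂ = 0 := by
      rw [hLinner J₂ hJ₂re, real_inner_comm, hJ₁J₂, mul_zero]
    have hLJ₃ : Lfn n e₁ e₂ (J₁ * J₂) = 0 := by
      rw [hLinner (J₁ * J₂) hJ₃re, real_inner_comm, hJ₁J₃, mul_zero]
    refine ⟨J₁, J₂, J₁ * J₂, hJ₁re, hJ₂re, hJ₃re, hJ₁n, hJ₂n, hJ₃n, hJ₁J₂, hJ₁J₃, hJ₂J₃,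
      rfl, Real.arccos r, ⟨Real.arccos_nonneg r, Real.arccos_le_pi_div_two.mpr hrpos.le⟩, ?_⟩
    intro v hv hn
    have h1 := key J₁ hJ₁re v hv hn
    have h2 := key J₂ hJ₂re v hv hn
    have h3 := key (J₁ * J₂) hJ₃re v hv hn
    rw [hLJ₁, abs_of_pos hrpos] at h1
    rw [hLJ₂, abs_zero] at h2
    rw [hLJ₃, abs_zero] at h3
    refine ⟨?_, ?_, ?_⟩
    · rw [h1, Real.cos_arccos (by linarith) hr1]
    · exact (Submodule.coe_eq_zero).mp (norm_eq_zero.mp h2)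
    · exact (Submodule.coe_eq_zero).mp (norm_eq_zero.mp h3)
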